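/- Let q : Fin 4 × Fin 4 → ℝ be nonnegative with total sum 1 in the strong surrogate type model, with γ, a = P(Y=0,S=0|T=0), d = P(Y=1,S=1|T=0), e = P(S=0|T=1), and ACE = ACE(T→Y) defined as linear functionals of q as usual. If γ = (1 + a + d)/2 and additionally the lower bound L₇ = γ − e − d equals the upper bound U₇ = −γ + a + (1−e), then ACE = γ − e − d exactly; in particular, when L₇ = U₇ the average causal effect ACE(T→Y) is point identified from the observed data. -/
import Mathlib


/- Strong-surrogate potential-outcome-type model: `q (i, j)` is the proportion of the
type with `(S_{T=0}, S_{T=1})` given by the binary expansion of `i` and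
`(Y_{S=0}, Y_{S=1})` given by the binary expansion of `j`. -/

/-- `P(Y=0, S=0 | T=0)` -/
noncomputable def pA (q : Fin 4 × Fin 4 → ℝ) : ℝ := q (0, 0) + q (0, 1) + q (1, 0) + q (1, 1)

/-- `P(Y=1, S=0 | T=0)` -/
noncomputable def pB (q : Fin 4 × Fin 4 → ℝ) : ℝ := q (0, 2) + q (0, 3) + q (1, 2) + q (1, 3)

/-- `P(Y=0, S=1 | T=0)` -/
noncomputable def pC (q : Fin 4 × Fin 4 → ℝ) : ℝ := q (2, 0) + q (2, 2) + q (3, 0) + q (3, 2)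

/-- `P(Y=1, S=1 | T=0)` -/
noncomputable def pD (q : Fin 4 × Fin 4 → ℝ) : ℝ := q (2, 1) + q (2, 3) + q (3, 1) + q (3, 3)

/-- `P(S=0 | T=1)` -/
noncomputable def pE (q : Fin 4 × Fin 4 → ℝ) : ℝ :=
  q (0, 0) + q (0, 1) + q (0, 2) + q (0, 3) + q (2, 0) + q (2, 1) + q (2, 2) + q (2, 3)

/-- `γ = ACE(S → Y)` -/
noncomputable def gam (q : Fin 4 × Fin 4 → ℝ) : ℝ :=
  (q (0, 1) + q (1, 1) + q (2, 1) + q (3, 1)) - (q (0, 2) + q (1, 2) + q (2, 2) + q (3, 2))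

/-- `ACE(T → Y)` -/
noncomputable def ace (q : Fin 4 × Fin 4 → ℝ) : ℝ := q (2, 2) + q (1, 1) - q (1, 2) - q (2, 1)

theorem stmt12 (q : Fin 4 × Fin 4 → ℝ) (hq : ∀ p, 0 ≤ q p)
    (hsum : ∑ p : Fin 4 × Fin 4, q p = 1)
    (hγ : gam q = (1 + pA q + pD q) / 2)
    (hLU : gam q - pE q - pD q = -gam q + pA q + (1 - pE q)) :
    ace q = gam q - pE q - pD q := by
  have h := hq
  simp only [Fin.sum_univ_four, Fintype.sum_prod_type] at hsum
  unfold ace gam pA pD pE at *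
  linarith [hq (0,0), hq (0,1), hq (0,2), hq (0,3), hq (1,0), hq (1,1), hq (1,2), hq (1,3), hq (2,0), hq (2,1), hq (2,2), hq (2,3), hq (3,0), hq (3,1), hq (3,2), hq (3,3)]
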